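/- Let F: (0,∞) → ℝ be a nonnegative, differentiable, nondecreasing function satisfying t·F′(t) ≥ c·F(t)² for all t > 0, where c > 0. Then F ≡ 0. -/

import Mathlib

/-- a nonnegative differentiable nondecreasing function
F on (0,∞) with t·F′(t) ≥ c·F(t)², c > 0, vanishes identically. -/
theorem ode_lemma_vanishes (F : ℝ → ℝ) (c : ℝ) (hc : 0 < c)
    (hnonneg : ∀ t : ℝ, 0 < t → 0 ≤ F t)
    (hdiff : ∀ t : ℝ, 0 < t → DifferentiableAt ℝ F t)
    (hmono : MonotoneOn F (Set.Ioi (0:ℝ)))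
    (hode : ∀ t : ℝ, 0 < t → c * F t ^ 2 ≤ t * deriv F t) :
    ∀ t : ℝ, 0 < t → F t = 0 := by
  intro a ha
  by_contra hFa0
  have hFa : 0 < F a := lt_of_le_of_ne (hnonneg a ha) (Ne.symm hFa0)
  -- On [a, ∞), F t ≥ F a > 0
  have hFpos : ∀ t, a ≤ t → 0 < F t := fun t hat =>
    lt_of_lt_of_le hFa (hmono (Set.mem_Ioi.mpr ha) (Set.mem_Ioi.mpr (lt_of_lt_of_le ha hat)) hat)
  set g : ℝ → ℝ := fun t => c * Real.log t + (F t)⁻¹ with hg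
  have hderivg : ∀ t, a ≤ t → HasDerivAt g (c * t⁻¹ + -(deriv F t) / F t ^ 2) t := by
    intro t hat
    have ht : 0 < t := lt_of_lt_of_le ha hat
    have hne : F t ≠ 0 := (hFpos t hat).ne'
    exact ((Real.hasDerivAt_log ht.ne').const_mul c).add
      (((hdiff t ht).hasDerivAt).inv hne)
  -- g is antitone on [a, ∞)
  have hanti : AntitoneOn g (Set.Ici a) := by
    apply antitoneOn_of_deriv_nonpos (convex_Ici a)
    · exact fun t hat => ((hderivg t hat).continuousAt).continuousWithinAt
    · intro t hat
      rw [interior_Ici] at hat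
      exact ((hderivg t hat.le).differentiableAt).differentiableWithinAt
    · intro t hat
      rw [interior_Ici] at hat
      have ht : 0 < t := lt_of_lt_of_le ha hat.le
      have hF : 0 < F t := hFpos t hat.le
      rw [(hderivg t hat.le).deriv]
      have hF2 : 0 < F t ^ 2 := by positivity
      have key : c * t⁻¹ ≤ deriv F t / F t ^ 2 := by
        rw [le_div_iff₀ hF2]
        have h1 := hode t ht
        rw [← div_le_iff₀' ht] at h1
        calc c * t⁻¹ * F t ^ 2 = c * F t ^ 2 / t := by ring
          _ ≤ deriv F t := h1
      have : -(deriv F t) / F t ^ 2 = -(deriv F t / F t ^ 2) := by ring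
      rw [this]
      linarith
  -- choose b large so that c * log b > g a
  set B := g a with hB
  set b := max a (Real.exp ((B + 1) / c)) with hb
  have hab : a ≤ b := le_max_left _ _
  have hlogb : (B + 1) / c ≤ Real.log b := by
    rw [← Real.log_exp ((B + 1) / c)]
    exact Real.log_le_log (Real.exp_pos _) (le_max_right _ _)
  have h1 : B + 1 ≤ c * Real.log b := by
    rw [div_le_iff₀ hc, mul_comm] at hlogb
    linarith
  have h2 : g b ≤ B := hanti (Set.mem_Ici.mpr le_rfl) (Set.mem_Ici.mpr hab) hab
  have h3 : 0 ≤ (F b)⁻¹ := le_of_lt (inv_pos.mpr (hFpos b hab))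
  have : B + 1 ≤ B := by
    calc B + 1 ≤ c * Real.log b := h1
      _ ≤ c * Real.log b + (F b)⁻¹ := by linarith
      _ = g b := rfl
      _ ≤ B := h2
  linarith
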